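/- Let R be a local ring. Every automorphism of the R-algebra M_n(R) of n×n matrices is inner, i.e., of the form A ↦ U A U⁻¹ for some U ∈ GL_n(R). -/

import Mathlib

open Matrix

section Aux

variable {R : Type*} [CommRing R] {n : ℕ}

private lemma SN.sum_mulVec {ι : Type*} (s : Finset ι)
    (M : ι → Matrix (Fin n) (Fin n) R) (x : Fin n → R) :
    (∑ i ∈ s, M i) *ᵥ x = ∑ i ∈ s, M i *ᵥ x := by
  classical
  induction s using Finset.induction with
  | empty => simp [Matrix.zero_mulVec]
  | insert _ _ h ih => simp [Finset.sum_insert h, Matrix.add_mulVec, ih]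

private lemma SN.mulVec_sum {ι : Type*} (s : Finset ι)
    (M : Matrix (Fin n) (Fin n) R) (v : ι → Fin n → R) :
    M *ᵥ (∑ i ∈ s, v i) = ∑ i ∈ s, M *ᵥ v i :=
  _root_.map_sum M.mulVecLin v s

private lemma SN.sum_diag_eq_one [NeZero n] :
    (∑ i : Fin n, single i i (1 : R)) = 1 := by
  ext a b
  simp only [Matrix.sum_apply, single, of_apply, Matrix.one_apply]
  rw [Finset.sum_congr rfl (fun i _ => by
    rw [show (if i = a ∧ i = b then (1:R) else 0)
      = if i = a then (if a = b then (1:R) else 0) else 0 by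
        by_cases h1 : i = a <;> by_cases h2 : a = b <;> simp [h1, h2]])]
  simp

private lemma SN.mul_stdBasis (A : Matrix (Fin n) (Fin n) R) (j p : Fin n) :
    A * single j p 1 = ∑ k, A k j • single k p (1 : R) := by
  ext a b
  simp only [Matrix.mul_apply, Matrix.sum_apply, single, of_apply,
    Matrix.smul_apply, smul_eq_mul]
  by_cases hb : p = b
  · subst hb
    simp
  · simp [hb]

end Aux

/-- **Skolem–Noether for matrix algebras over a local ring.**
Let `R` be a (commutative) local ring. Every `R`-algebra automorphism of the algebra
`Matrix (Fin n) (Fin n) R` of `n × n` matrices is inner: it has the form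
`A ↦ U * A * U⁻¹` for some invertible matrix `U ∈ GL n R`. -/
theorem matrix_algebra_automorphism_isInner
    (R : Type*) [CommRing R] [IsLocalRing R] (n : ℕ)
    (φ : Matrix (Fin n) (Fin n) R ≃ₐ[R] Matrix (Fin n) (Fin n) R) :
    ∃ U : GL (Fin n) R, ∀ A : Matrix (Fin n) (Fin n) R,
      φ A = (U : Matrix (Fin n) (Fin n) R) * A * (↑U⁻¹ : Matrix (Fin n) (Fin n) R) := by
  rcases Nat.eq_zero_or_pos n with hn | hn
  · subst hn
    exact ⟨1, fun A => by ext i j; exact i.elim0⟩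
  haveI : NeZero n := ⟨hn.ne'⟩
  set E : Fin n → Fin n → Matrix (Fin n) (Fin n) R :=
    fun i j => single i j 1 with hE
  have hEmul : ∀ i j k l, E i j * E k l = if j = k then E i l else 0 := by
    intro i j k l
    by_cases h : j = k
    · subst h; simp [hE]
    · simp [hE, h]
  have hEsum : (∑ i, E i i) = 1 := SN.sum_diag_eq_one
  set e : Matrix (Fin n) (Fin n) R := φ (E 0 0) with he
  have hee : e * e = e := by
    rw [he, ← _root_.map_mul, hEmul]; simp
  set P : Submodule R (Fin n → R) := LinearMap.range e.mulVecLin with hP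
  -- the images of the `φ (E 0 i)` land in `P`
  have memP : ∀ (i : Fin n) (x : Fin n → R), (φ (E 0 i)) *ᵥ x ∈ P := by
    intro i x
    refine ⟨(φ (E 0 i)) *ᵥ x, ?_⟩
    rw [mulVecLin_apply, mulVec_mulVec, he, ← _root_.map_mul, hEmul]
    simp
  have hfix : ∀ p : (Fin n → R), p ∈ P → e *ᵥ p = p := by
    rintro p ⟨x, rfl⟩
    rw [mulVecLin_apply, mulVec_mulVec, hee]
  -- P is finite projective, hence free since R is local
  haveI hPfin : Module.Finite R P := Module.Finite.range e.mulVecLin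
  haveI hPproj : Module.Projective R P := by
    refine Module.Projective.of_split P.subtype
      (LinearMap.codRestrict P e.mulVecLin (fun x => LinearMap.mem_range_self _ x)) ?_
    refine LinearMap.ext fun p => Subtype.ext ?_
    rw [LinearMap.comp_apply, LinearMap.codRestrict_apply, mulVecLin_apply]
    exact hfix _ p.2
  haveI : Module.FinitePresentation R P := Module.finitePresentation_of_projective R P
  haveI : Module.Free R P := Module.free_of_flat_of_isLocalRing
  -- the linear equivalence `(Fin n → P) ≃ (Fin n → R)`
  let f : (Fin n → R) →ₗ[R] (Fin n → P) :=
    LinearMap.pi fun i => LinearMap.codRestrict P (φ (E 0 i)).mulVecLin (memP i)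
  let g : (Fin n → P) →ₗ[R] (Fin n → R) :=
    ∑ i, (φ (E i 0)).mulVecLin ∘ₗ P.subtype ∘ₗ LinearMap.proj i
  have hg : ∀ p : Fin n → P, g p = ∑ i, (φ (E i 0)) *ᵥ (p i : Fin n → R) := by
    intro p
    simp [g, mulVecLin_apply]
  have hgf : ∀ x, g (f x) = x := by
    intro x
    rw [hg]
    have : ∀ i : Fin n, (φ (E i 0)) *ᵥ ((f x i : Fin n → R)) = (φ (E i i)) *ᵥ x := by
      intro i
      show (φ (E i 0)) *ᵥ ((φ (E 0 i)) *ᵥ x) = _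
      rw [mulVec_mulVec, ← _root_.map_mul, hEmul]
      simp
    rw [Finset.sum_congr rfl (fun i _ => this i), ← SN.sum_mulVec,
      ← _root_.map_sum, hEsum, _root_.map_one, Matrix.one_mulVec]
  have hfg : ∀ p, f (g p) = p := by
    intro p
    funext j
    apply Subtype.ext
    show (φ (E 0 j)) *ᵥ (g p) = (p j : Fin n → R)
    rw [hg, SN.mulVec_sum]
    have : ∀ i : Fin n, (φ (E 0 j)) *ᵥ ((φ (E i 0)) *ᵥ (p i : Fin n → R))
        = if i = j then e *ᵥ (p i : Fin n → R) else 0 := by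
      intro i
      rw [mulVec_mulVec, ← _root_.map_mul, hEmul]
      by_cases h : i = j
      · subst h; simp [he]
      · simp [Ne.symm h, h, Matrix.zero_mulVec]
    rw [Finset.sum_congr rfl (fun i _ => this i), Finset.sum_ite_eq' _ j]
    simp [hfix _ (p j).2]
  let eqv : (Fin n → P) ≃ₗ[R] (Fin n → R) :=
    LinearEquiv.ofLinear g f (LinearMap.ext hgf) (LinearMap.ext hfg)
  -- rank computation: finrank P = 1
  have hrank : Module.finrank R P = 1 := by
    have h1 : Module.finrank R (Fin n → P) = Module.finrank R (Fin n → R) :=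
      eqv.finrank_eq
    rw [Module.finrank_pi_fintype, Module.finrank_pi] at h1
    simp only [Finset.sum_const, Finset.card_univ, Fintype.card_fin, smul_eq_mul] at h1
    exact Nat.eq_of_mul_eq_mul_left hn (by rw [h1, mul_one])
  let b : Module.Basis (Fin 1) R P := Module.finBasisOfFinrankEq R P hrank
  set v : Fin n → R := (b 0 : Fin n → R) with hv
  have hgen : ∀ p : P, ∃ c : R, (p : Fin n → R) = c • v := by
    intro p
    have hmem : p ∈ Submodule.span R {b 0} := by
      have := b.span_eq
      rw [show Set.range b = {b 0} from Set.range_unique] at this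
      rw [this]; trivial
    obtain ⟨c, hc⟩ := Submodule.mem_span_singleton.mp hmem
    exact ⟨c, by rw [← hc]; rfl⟩
  -- the matrix U
  set U : Matrix (Fin n) (Fin n) R :=
    Matrix.of (fun i j => ((φ (E j 0)) *ᵥ v) i) with hU
  have hUcol : ∀ w : Fin n → R, U *ᵥ w = ∑ j, w j • ((φ (E j 0)) *ᵥ v) := by
    intro w
    funext i
    simp only [Matrix.mulVec, dotProduct, hU, Matrix.of_apply, Finset.sum_apply,
      Pi.smul_apply, smul_eq_mul]
    exact Finset.sum_congr rfl fun j _ => mul_comm _ _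
  -- key intertwining identity
  have hkey : ∀ A : Matrix (Fin n) (Fin n) R, φ A * U = U * A := by
    intro A
    ext i j
    have lhs : (φ A * U) i j = ((φ (A * E j 0)) *ᵥ v) i := by
      rw [_root_.map_mul]
      simp only [Matrix.mul_apply, hU, Matrix.of_apply]
      rw [← mulVec_mulVec]
      rfl
    rw [lhs, hE, SN.mul_stdBasis, _root_.map_sum]
    have : ∀ k : Fin n, φ (A k j • single k (0 : Fin n) (1:R))
        = A k j • φ (E k 0) := fun k => _root_.map_smul φ _ _
    rw [Finset.sum_congr rfl fun k _ => this k, SN.sum_mulVec]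
    simp only [Finset.sum_apply, Matrix.smul_mulVec, Pi.smul_apply, smul_eq_mul]
    simp only [Matrix.mul_apply, hU, Matrix.of_apply]
    exact Finset.sum_congr rfl fun k _ => mul_comm _ _
  -- U is invertible
  have hsurj : Function.Surjective U.mulVec := by
    intro x
    have hx : x = ∑ i, (φ (E i 0)) *ᵥ ((φ (E 0 i)) *ᵥ x) := by
      have : ∀ i : Fin n, (φ (E i 0)) *ᵥ ((φ (E 0 i)) *ᵥ x) = (φ (E i i)) *ᵥ x := by
        intro i
        rw [mulVec_mulVec, ← _root_.map_mul, hEmul]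
        simp
      rw [Finset.sum_congr rfl fun i _ => this i, ← SN.sum_mulVec, ← _root_.map_sum,
        hEsum, _root_.map_one, Matrix.one_mulVec]
    choose c hc using fun i => hgen ⟨_, memP i x⟩
    refine ⟨c, ?_⟩
    rw [hUcol]
    conv_rhs => rw [hx]
    refine (Finset.sum_congr rfl fun i _ => ?_).symm
    have : (φ (E 0 i)) *ᵥ x = c i • v := hc i
    rw [this, Matrix.mulVec_smul]
  have hUnit : IsUnit U := mulVec_surjective_iff_isUnit.mp hsurj
  refine ⟨hUnit.unit, fun A => ?_⟩
  have hval : (hUnit.unit : Matrix (Fin n) (Fin n) R) = U := hUnit.unit_spec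
  conv_lhs => rw [← mul_one (φ A), ← Units.mul_inv hUnit.unit, ← mul_assoc]
  rw [hval, hkey A]
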